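/- For q > 2, the center of distances of the set of subsums of the geometric sequence (1/q^n)_{n≥1} is {0} ∪ {1/q^n : n ≥ 1}. -/

import Mathlib

noncomputable def centerOfDistances (X : Set ℝ) : Set ℝ :=
  {α | 0 ≤ α ∧ ∀ x ∈ X, ∃ y ∈ X, |x - y| = α}

noncomputable def subsums (a : ℕ → ℝ) : Set ℝ :=
  {x | ∃ A : Set ℕ, x = ∑' n : A, a n}

noncomputable def cantorval : Set ℝ :=
  {x | ∃ d : ℕ → ℝ, (∀ n, d n ∈ ({0, 2, 3, 5} : Set ℝ)) ∧
    x = ∑' n : ℕ, d n / 4 ^ (n + 1)}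

namespace Stmt4Aux

noncomputable def geo (q : ℝ) : ℕ → ℝ := fun n => 1 / q ^ (n + 1)

noncomputable def FF (q : ℝ) (A : Set ℕ) : ℝ := ∑' n, A.indicator (geo q) n

variable {q : ℝ}

lemma geo_pos (hq : 0 < q) (n : ℕ) : 0 < geo q n := by
  simp only [geo]; positivity

lemma summable_geo (hq : 1 < q) : Summable (geo q) := by
  have h0 : (0:ℝ) < q := lt_trans one_pos hq
  have h1 : (1/q) < 1 := by rw [div_lt_one h0]; exact hq
  have h2 : (0:ℝ) ≤ 1/q := by positivity
  have h := (summable_geometric_of_lt_one h2 h1).mul_left (1/q)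
  refine h.congr fun n => ?_
  show (1/q) * (1/q)^n = geo q n
  rw [geo, ← one_div_pow, pow_succ]; ring

lemma summable_ind (hq : 1 < q) (A : Set ℕ) : Summable (A.indicator (geo q)) := by
  refine Summable.of_nonneg_of_le (fun n => ?_) (fun n => ?_) (summable_geo hq)
  · by_cases h : n ∈ A <;> simp [Set.indicator, h, (geo_pos (by linarith) n).le]
  · by_cases h : n ∈ A <;> simp [Set.indicator, h, (geo_pos (by linarith) n).le]

lemma FF_nonneg (hq : 1 < q) (A : Set ℕ) : 0 ≤ FF q A := by
  refine tsum_nonneg fun n => ?_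
  by_cases h : n ∈ A <;> simp [Set.indicator, h, (geo_pos (by linarith) n).le]

lemma FF_mono (hq : 1 < q) {A B : Set ℕ} (h : A ⊆ B) : FF q A ≤ FF q B := by
  refine Summable.tsum_le_tsum (fun n => ?_) (summable_ind hq A) (summable_ind hq B)
  exact Set.indicator_le_indicator_of_subset h (fun n => (geo_pos (by linarith) n).le) n

lemma FF_union (hq : 1 < q) {A B : Set ℕ} (h : Disjoint A B) :
    FF q (A ∪ B) = FF q A + FF q B := by
  rw [FF, Set.indicator_union_of_disjoint h]
  exact Summable.tsum_add (summable_ind hq A) (summable_ind hq B)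

lemma FF_singleton (s : ℕ) : FF q {s} = geo q s := by
  rw [FF]
  have h : ({s} : Set ℕ).indicator (geo q) = fun n => if n = s then geo q s else 0 := by
    funext n; by_cases h : n = s <;> simp [Set.indicator, h]
  rw [h]
  exact tsum_ite_eq s (fun _ => geo q s)

lemma FF_insert (hq : 1 < q) {A : Set ℕ} {s : ℕ} (hs : s ∉ A) :
    FF q (insert s A) = geo q s + FF q A := by
  rw [show insert s A = {s} ∪ A from rfl, FF_union hq (by simpa using hs), FF_singleton]

lemma FF_diff (hq : 1 < q) {A : Set ℕ} {s : ℕ} (hs : s ∈ A) :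
    FF q (A \ {s}) = FF q A - geo q s := by
  have h1 : s ∉ A \ {s} := by simp
  have h2 : insert s (A \ {s}) = A := by
    rw [Set.insert_diff_singleton]; exact Set.insert_eq_self.mpr hs
  have := FF_insert hq h1
  rw [h2] at this
  linarith

lemma FF_univ (hq : 1 < q) : FF q Set.univ = (q - 1)⁻¹ := by
  have h0 : (0:ℝ) < q := lt_trans one_pos hq
  have h1 : (1/q) < 1 := by rw [div_lt_one h0]; exact hq
  have h2 : (0:ℝ) ≤ 1/q := by positivity
  have hx : FF q Set.univ = ∑' n, geo q n := by
    simp [FF, Set.indicator_univ]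
  rw [hx]
  have hg : (geo q) = fun n : ℕ => (1/q) * (1/q)^n := by
    funext n; rw [geo, ← one_div_pow, pow_succ]; ring
  rw [hg, tsum_mul_left, tsum_geometric_of_lt_one h2 h1]
  have hq1 : q - 1 ≠ 0 := by intro h; rw [sub_eq_zero] at h; rw [h] at hq; exact lt_irrefl 1 hq
  have hqne : q ≠ 0 := ne_of_gt h0
  field_simp

lemma FF_tail (hq : 1 < q) (n : ℕ) : FF q {k | n ≤ k} = (q ^ n)⁻¹ * (q - 1)⁻¹ := by
  induction n with
  | zero =>
    have h : {k : ℕ | 0 ≤ k} = Set.univ := by ext k; simp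
    rw [h, FF_univ hq, pow_zero, inv_one, one_mul]
  | succ n ih =>
    have hins : {k | n ≤ k} = insert n {k | n + 1 ≤ k} := by
      ext k; simp; omega
    rw [hins, FF_insert hq (by simp)] at ih
    have hgoal : FF q {k | n + 1 ≤ k} = (q ^ n)⁻¹ * (q - 1)⁻¹ - geo q n := by linarith
    rw [hgoal, geo]
    have hq0 : q ≠ 0 := by positivity
    have hq1 : q - 1 ≠ 0 := by intro h; rw [sub_eq_zero] at h; rw [h] at hq; exact lt_irrefl 1 hq
    field_simp
    ring

end Stmt4Aux

open Stmt4Aux in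
theorem stmt4 (q : ℝ) (hq : 2 < q) :
    centerOfDistances (subsums (fun n => 1 / q ^ (n + 1))) =
      {0} ∪ {t : ℝ | ∃ n : ℕ, t = 1 / q ^ (n + 1)} := by
  have hq0 : (0:ℝ) < q := by linarith
  have hq1 : (1:ℝ) < q := by linarith
  have hgeo : (fun n : ℕ => 1 / q ^ (n + 1)) = geo q := rfl
  rw [hgeo]
  have hmemX : ∀ A : Set ℕ, FF q A ∈ subsums (geo q) := by
    intro A
    exact ⟨A, by rw [tsum_subtype]; rfl⟩
  ext α
  simp only [centerOfDistances, Set.mem_setOf_eq, Set.mem_union, Set.mem_singleton_iff]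
  constructor
  · rintro ⟨hα0, hS⟩
    -- α is itself a subsum
    have h0X : (0:ℝ) ∈ subsums (geo q) := by
      have := hmemX ∅
      have h0 : FF q (∅ : Set ℕ) = 0 := by simp [FF]
      rwa [h0] at this
    obtain ⟨y, ⟨B, hB⟩, hy⟩ := hS 0 h0X
    rw [tsum_subtype] at hB
    have hyB : y = FF q B := hB
    have hynn : 0 ≤ y := hyB ▸ FF_nonneg hq1 B
    have hαB : α = FF q B := by
      rw [zero_sub, abs_neg, abs_of_nonneg hynn] at hy
      rw [← hy, hyB]
    by_cases hBe : B = ∅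
    · left
      rw [hαB, hBe]; simp [FF]
    · have hBne : B.Nonempty := Set.nonempty_iff_ne_empty.mpr hBe
      set n := sInf B with hn
      have hnB : n ∈ B := Nat.sInf_mem hBne
      have hmin : ∀ k ∈ B, n ≤ k := fun k hk => Nat.sInf_le hk
      suffices hBn : B = {n} by
        right
        exact ⟨n, by rw [hαB, hBn, FF_singleton]; rfl⟩
      by_contra hBn
      -- there is another element
      have hex : ∃ s₀ ∈ B, s₀ ≠ n := by
        by_contra h
        push_neg at h
        apply hBn
        ext k
        constructor
        · exact fun hk => h k hk
        · rintro rfl; exact hnB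
      obtain ⟨s₀, hs₀B, hs₀n⟩ := hex
      have hs₀gt : n < s₀ := lt_of_le_of_ne (hmin s₀ hs₀B) (Ne.symm hs₀n)
      -- key quantities
      have hq1inv : (q - 1)⁻¹ < 1 := by
        rw [inv_lt_one_iff₀]; right; linarith
      have hlampos : 0 < (q ^ n)⁻¹ - (q ^ n)⁻¹ * (q - 1)⁻¹ := by
        have hp : (0:ℝ) < (q ^ n)⁻¹ := by positivity
        nlinarith
      -- choose s
      have hchoice : ∃ s ∈ B, n < s ∧
          geo q s - FF q ({k | s < k} \ B) <
            (q ^ n)⁻¹ - (q ^ n)⁻¹ * (q - 1)⁻¹ := by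
        by_cases hfin : B.Finite
        · have hne' : hfin.toFinset.Nonempty := by
            rwa [Set.Finite.toFinset_nonempty]
          set s := hfin.toFinset.max' hne' with hs
          have hsB : s ∈ B := by
            have := hfin.toFinset.max'_mem hne'
            rwa [Set.Finite.mem_toFinset] at this
          have hmax : ∀ k ∈ B, k ≤ s := by
            intro k hk
            exact hfin.toFinset.le_max' k (by rwa [Set.Finite.mem_toFinset])
          have hns : n < s := by
            have h1 := hmin s hsB
            have h2 := hmax s₀ hs₀B
            have h3 := hmin s₀ hs₀B
            omega
          refine ⟨s, hsB, hns, ?_⟩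
          have hset : {k | s < k} \ B = {k | s + 1 ≤ k} := by
            ext k
            simp only [Set.mem_diff, Set.mem_setOf_eq]
            constructor
            · rintro ⟨h1, _⟩; omega
            · intro h1
              refine ⟨by omega, fun hk => ?_⟩
              have := hmax k hk; omega
          rw [hset, FF_tail hq1]
          have hgs : geo q s = (q ^ (s+1))⁻¹ := by rw [geo, one_div]
          rw [hgs]
          have hlt : (q ^ (s+1))⁻¹ < (q ^ n)⁻¹ := by
            apply inv_strictAnti₀ (by positivity)
            exact pow_lt_pow_right₀ hq1 (by omega)
          nlinarith [hlampos, hlt, sub_pos.mpr hq1inv, inv_pos.mpr (pow_pos hq0 (s+1))]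
        · -- infinite case
          have hinf : B.Infinite := hfin
          obtain ⟨k₀, hk₀⟩ := exists_pow_lt_of_lt_one hlampos
            (show 1/q < 1 by rw [div_lt_one hq0]; linarith)
          obtain ⟨s, hsB, hs⟩ := hinf.exists_gt (max n k₀)
          have hns : n < s := lt_of_le_of_lt (le_max_left _ _) hs
          refine ⟨s, hsB, hns, ?_⟩
          have h1 : geo q s = (1/q) ^ (s+1) := by rw [geo, one_div_pow]
          have h2 : ((1:ℝ)/q) ^ (s+1) ≤ (1/q) ^ k₀ := by
            apply pow_le_pow_of_le_one (by positivity) (by rw [div_le_one hq0]; linarith)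
            have := le_max_right n k₀; omega
          have h3 : 0 ≤ FF q ({k | s < k} \ B) := FF_nonneg hq1 _
          calc geo q s - FF q ({k | s < k} \ B) ≤ geo q s := by linarith
            _ = (1/q) ^ (s+1) := h1
            _ ≤ (1/q) ^ k₀ := h2
            _ < _ := hk₀
      obtain ⟨s, hsB, hns, hepslam⟩ := hchoice
      have hsn : s ≠ n := by omega
      set c := FF q ({k | s < k} \ B) with hc
      set ε := geo q s - c with hεdef
      have hc0 : 0 ≤ c := FF_nonneg hq1 _
      have hε_le : ε ≤ geo q s := by rw [hεdef]; linarith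
      -- ε > 0
      have hcle : c ≤ (q ^ (s+1))⁻¹ * (q - 1)⁻¹ := by
        have hsub : {k | s < k} \ B ⊆ {k | s + 1 ≤ k} := by
          intro k hk
          simp only [Set.mem_diff, Set.mem_setOf_eq] at hk ⊢
          omega
        have := FF_mono hq1 hsub
        rwa [FF_tail hq1] at this
      have hε_pos : 0 < ε := by
        rw [hεdef]
        have hgs : geo q s = (q ^ (s+1))⁻¹ := by rw [geo, one_div]
        have hp : (0:ℝ) < (q ^ (s+1))⁻¹ := by positivity
        nlinarith [sub_pos.mpr hq1inv]
      -- the probe set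
      set U : Set ℕ := (B \ {s}) ∪ ({k | s < k} \ B) with hUdef
      set Ux : Set ℕ := {k | k < n} ∪ U with hUxdef
      have hdisj2 : Disjoint (B \ {s}) ({k | s < k} \ B) := by
        rw [Set.disjoint_left]
        rintro k ⟨hkB, _⟩ ⟨_, hkB'⟩
        exact hkB' hkB
      have hdisj1 : Disjoint {k | k < n} U := by
        rw [Set.disjoint_left]
        rintro k hk hkU
        simp only [Set.mem_setOf_eq] at hk
        rcases hkU with ⟨hkB, _⟩ | ⟨hk', _⟩
        · exact absurd (hmin k hkB) (by omega)
        · simp only [Set.mem_setOf_eq] at hk'; omega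
      have hU : FF q U = α - ε := by
        rw [hUdef, FF_union hq1 hdisj2, FF_diff hq1 hsB, ← hαB, ← hc, hεdef]
        ring
      have hx : FF q Ux = FF q {k | k < n} + (α - ε) := by
        rw [hUxdef, FF_union hq1 hdisj1, hU]
      -- global facts
      have hT : FF q Set.univ = (q - 1)⁻¹ := FF_univ hq1
      have hsplitset : {k : ℕ | k < n} ∪ {k | n ≤ k} = Set.univ := by
        ext k; simp only [Set.mem_union, Set.mem_setOf_eq, Set.mem_univ, iff_true]; omega
      have hdisj3 : Disjoint {k : ℕ | k < n} {k | n ≤ k} := by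
        rw [Set.disjoint_left]; intro k h1 h2
        simp only [Set.mem_setOf_eq] at h1 h2; omega
      have hD : FF q {k | k < n} + (q ^ n)⁻¹ * (q - 1)⁻¹ = (q - 1)⁻¹ := by
        have := FF_union hq1 hdisj3
        rw [hsplitset, hT, FF_tail hq1] at this
        linarith
      -- α ≥ geo n + geo s
      have hαge : geo q n + geo q s ≤ α := by
        have hsub : ({n, s} : Set ℕ) ⊆ B := by
          intro k hk
          rcases hk with rfl | hk
          · exact hnB
          · rw [Set.mem_singleton_iff] at hk; subst hk; exact hsB
        have h1 : FF q ({n, s} : Set ℕ) = geo q n + geo q s := by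
          rw [show ({n, s} : Set ℕ) = insert n {s} from rfl,
            FF_insert hq1 (by simp [hsn.symm]), FF_singleton]
        have := FF_mono hq1 hsub
        rw [h1, ← hαB] at this
        exact this
      -- apply center property at the probe
      obtain ⟨y₂, ⟨C, hC⟩, hy₂⟩ := hS (FF q Ux) (hmemX Ux)
      rw [tsum_subtype] at hC
      have hy₂C : y₂ = FF q C := hC
      rcases (abs_eq hα0).mp hy₂ with hcase | hcase
      · -- y₂ = x - α = D - ε
        have hy2v : FF q C = FF q {k | k < n} - ε := by
          rw [← hy₂C]
          rw [hx] at hcase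
          linarith
        by_cases hsubC : {k | k < n} ⊆ C
        · have hge := FF_mono hq1 hsubC
          rw [hy2v] at hge
          linarith
        · rw [Set.not_subset] at hsubC
          obtain ⟨i, hiLt, hiC⟩ := hsubC
          simp only [Set.mem_setOf_eq] at hiLt
          have hCsub : C ⊆ Set.univ \ {i} := by
            intro k hk
            refine ⟨trivial, ?_⟩
            simp only [Set.mem_singleton_iff]
            rintro rfl
            exact hiC hk
          have hCle : FF q C ≤ (q - 1)⁻¹ - geo q i := by
            have h1 := FF_mono hq1 hCsub
            rwa [FF_diff hq1 (Set.mem_univ i), hT] at h1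
          have hgeoi : (q ^ n)⁻¹ ≤ geo q i := by
            rw [geo, one_div]
            apply inv_anti₀ (by positivity)
            exact pow_le_pow_right₀ hq1.le (by omega)
          linarith
      · -- y₂ = x + α
        have hy2v : FF q C = FF q {k | k < n} + (α - ε) + α := by
          rw [hx] at hcase
          linarith [hy₂C]
        have hCle : FF q C ≤ (q - 1)⁻¹ := by
          have := FF_mono hq1 (Set.subset_univ C)
          rwa [hT] at this
        have h2geo : (q ^ n)⁻¹ * (q - 1)⁻¹ < 2 * geo q n := by
          have key : (q - 1)⁻¹ < 2 * q⁻¹ := by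
            rw [show (2:ℝ) * q⁻¹ = 2 / q by ring, ← one_div, div_lt_div_iff₀ (by linarith) hq0]
            linarith
          have hp : (0:ℝ) < (q ^ n)⁻¹ := by positivity
          have h1 : (q ^ n)⁻¹ * (q - 1)⁻¹ < (q ^ n)⁻¹ * (2 * q⁻¹) :=
            mul_lt_mul_of_pos_left key hp
          have h2 : (q ^ n)⁻¹ * (2 * q⁻¹) = 2 * geo q n := by
            rw [geo, pow_succ]
            have : q ≠ 0 := ne_of_gt hq0
            field_simp
          linarith
        have hgs : 0 < geo q s := geo_pos hq0 s
        linarith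
  · rintro (h0 | ⟨m, hm⟩)
    · subst h0
      exact ⟨le_refl 0, fun x hx => ⟨x, hx, by simp⟩⟩
    · have hαgeo : α = geo q m := hm
      constructor
      · rw [hαgeo]; exact (geo_pos hq0 m).le
      · intro x hx
        obtain ⟨A, hA⟩ := hx
        rw [tsum_subtype] at hA
        have hxA : x = FF q A := hA
        by_cases hmA : m ∈ A
        · refine ⟨FF q (A \ {m}), hmemX _, ?_⟩
          rw [hxA, FF_diff hq1 hmA, hαgeo]
          rw [show FF q A - (FF q A - geo q m) = geo q m by ring]
          exact abs_of_pos (geo_pos hq0 m)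
        · refine ⟨FF q (insert m A), hmemX _, ?_⟩
          rw [hxA, FF_insert hq1 hmA, hαgeo]
          rw [show FF q A - (geo q m + FF q A) = -(geo q m) by ring, abs_neg]
          exact abs_of_pos (geo_pos hq0 m)
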